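/- Let p be an odd prime and let G = ⟨{a} ∪ {b^(j)_i : 1 ≤ j ≤ p, 1 ≤ i ≤ r_j}⟩ be a generalised multi-edge spinal group in standard form. Then the abelianisation G/G' is elementary abelian of order p^{1+r₁+⋯+r_p}. More precisely, there is a well-defined surjective homomorphism G → (Z/pZ) × ∏_{j=1}^p (Z/pZ)^{r_j} sending a to (1, 0) and each b^(j)_i to the element whose only non-zero coordinate is a 1 in the (j,i)-th position, and its kernel is exactly the derived subgroup G'. -/

import Mathlib

namespace GMS

abbrev Vtx (p : ℕ) := List (Fin p)

def applyP {p : ℕ} : (Vtx p → Equiv.Perm (Fin p)) → Vtx p → Vtx p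
  | _, [] => []
  | f, x :: ω => f [] x :: applyP (fun τ => f (x :: τ)) ω

def invApplyP {p : ℕ} : (Vtx p → Equiv.Perm (Fin p)) → Vtx p → Vtx p
  | _, [] => []
  | f, y :: ω => (f []).symm y :: invApplyP (fun τ => f ((f []).symm y :: τ)) ω

theorem applyP_invApplyP {p : ℕ} (f : Vtx p → Equiv.Perm (Fin p)) (ω : Vtx p) :
    applyP f (invApplyP f ω) = ω := by
  induction ω generalizing f with
  | nil => rfl
  | cons y ω ih => simp [applyP, invApplyP, ih]

theorem invApplyP_applyP {p : ℕ} (f : Vtx p → Equiv.Perm (Fin p)) (ω : Vtx p) :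
    invApplyP f (applyP f ω) = ω := by
  induction ω generalizing f with
  | nil => rfl
  | cons x ω ih => simp [applyP, invApplyP, ih]

def toPerm {p : ℕ} (f : Vtx p → Equiv.Perm (Fin p)) : Equiv.Perm (Vtx p) :=
  ⟨applyP f, invApplyP f, invApplyP_applyP f, applyP_invApplyP f⟩

def treeAut (p : ℕ) : Subgroup (Equiv.Perm (Vtx p)) where
  carrier := {f | ∀ ω ω' : Vtx p, ω <+: ω' → f ω <+: f ω' ∧ f.symm ω <+: f.symm ω'}
  one_mem' := fun _ _ h => ⟨h, h⟩
  mul_mem' := by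
    intro f g hf hg ω ω' h
    exact ⟨(hf _ _ (hg _ _ h).1).1, (hg _ _ (hf _ _ h).2).2⟩
  inv_mem' := by
    intro f hf ω ω' h
    exact ⟨(hf _ _ h).2, (hf _ _ h).1⟩

theorem applyP_append {p : ℕ} (f : Vtx p → Equiv.Perm (Fin p)) (ω t : Vtx p) :
    applyP f (ω ++ t) = applyP f ω ++ applyP (fun τ => f (ω ++ τ)) t := by
  induction ω generalizing f with
  | nil => rfl
  | cons x ω ih => simp [applyP, ih]

theorem invApplyP_append {p : ℕ} (f : Vtx p → Equiv.Perm (Fin p)) (ω t : Vtx p) :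
    invApplyP f (ω ++ t) =
      invApplyP f ω ++ invApplyP (fun τ => f (invApplyP f ω ++ τ)) t := by
  induction ω generalizing f with
  | nil => rfl
  | cons x ω ih => simp [invApplyP, ih]

theorem toPerm_mem_treeAut {p : ℕ} (f : Vtx p → Equiv.Perm (Fin p)) :
    toPerm f ∈ treeAut p := by
  intro ω ω' h
  obtain ⟨t, rfl⟩ := h
  exact ⟨⟨_, (applyP_append f ω t).symm⟩, ⟨_, (invApplyP_append f ω t).symm⟩⟩

/-- The `p`-cycle `x ↦ x + 1` on `Fin p`. -/
def rootCycle (p : ℕ) [NeZero p] : Equiv.Perm (Fin p) := Equiv.addRight 1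

/-- The rooted automorphism `a`, cyclically permuting the first-level subtrees. -/
def aAut (p : ℕ) [NeZero p] : Equiv.Perm (Vtx p) :=
  toPerm (fun ω => if ω = [] then rootCycle p else 1)

/-- Conversion of a non-zero residue position to an index in `Fin (p-1)`. -/
def offIdx {p : ℕ} (hp1 : 1 < p) (k : Fin p) : Fin (p - 1) :=
  ⟨k.val - 1, by have := k.isLt; omega⟩

/-- The portrait of a directed automorphism with directing path `c, cc, ccc, …` and
defining vector `e`: its section at the first-level vertex `c` is itself, and its
section at a first-level vertex `c + k` (for `k ≠ 0`) is `a^{e_k}`. -/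
def dirPort {p : ℕ} [NeZero p] (hp1 : 1 < p) (c : Fin p) (e : Fin (p - 1) → ZMod p) :
    Vtx p → Equiv.Perm (Fin p)
  | [] => 1
  | [x] => if x = c then 1 else rootCycle p ^ (e (offIdx hp1 (x - c))).val
  | x :: y :: ω => if x = c then dirPort hp1 c e (y :: ω) else 1

/-- The directed automorphism with directing path `c, cc, ccc, …` and defining
vector `e`; it satisfies `ψ₁(b) = (…, a^{e_k} at position c + k, …, b at position c, …)`. -/
def dirAut {p : ℕ} [NeZero p] (hp1 : 1 < p) (c : Fin p) (e : Fin (p - 1) → ZMod p) :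
    Equiv.Perm (Vtx p) :=
  toPerm (dirPort hp1 c e)

/-- Defining data for a generalised multi-edge spinal group in standard form:
for each `j`, an `r j`-tuple of linearly independent defining vectors in `(ℤ/pℤ)^{p-1}`. -/
structure SpinalData (p : ℕ) where
  r : Fin p → ℕ
  r_le : ∀ j, r j ≤ p - 1
  r_ne : ∃ j, r j ≠ 0
  e : (j : Fin p) → Fin (r j) → Fin (p - 1) → ZMod p
  indep : ∀ j, LinearIndependent (ZMod p) (e j)

/-- The directing-path letter of the `j`-th family (`j` is 0-indexed; the paper's
family `j+1` is directed along the constant path with letter `p - j - 1`). -/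
def pathLetter {p : ℕ} [NeZero p] (j : Fin p) : Fin p := -(j + 1)

/-- The directed generator `b^{(j)}_i`. -/
def SpinalData.gen {p : ℕ} [NeZero p] (D : SpinalData p) (hp1 : 1 < p)
    (j : Fin p) (i : Fin (D.r j)) : Equiv.Perm (Vtx p) :=
  dirAut hp1 (pathLetter j) (D.e j i)

/-- The generating set `{a} ∪ {b^{(j)}_i}`. -/
def SpinalData.genSet {p : ℕ} [NeZero p] (D : SpinalData p) (hp1 : 1 < p) :
    Set (Equiv.Perm (Vtx p)) :=
  insert (aAut p) {g | ∃ j i, g = D.gen hp1 j i}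

/-- The generalised multi-edge spinal group in standard form associated to `D`. -/
def SpinalData.grp {p : ℕ} [NeZero p] (D : SpinalData p) (hp1 : 1 < p) :
    Subgroup (Equiv.Perm (Vtx p)) :=
  Subgroup.closure (D.genSet hp1)

theorem aAut_mem_grp {p : ℕ} [NeZero p] (D : SpinalData p) (hp1 : 1 < p) :
    aAut p ∈ D.grp hp1 :=
  Subgroup.subset_closure (Set.mem_insert _ _)

theorem gen_mem_grp {p : ℕ} [NeZero p] (D : SpinalData p) (hp1 : 1 < p)
    (j : Fin p) (i : Fin (D.r j)) : D.gen hp1 j i ∈ D.grp hp1 :=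
  Subgroup.subset_closure (Set.mem_insert_iff.mpr (Or.inr ⟨j, i, rfl⟩))

/-- `ψ₁(g) = (s 0, …, s (p-1))`: the element `g` stabilises the first level and has
section `s x` at the first-level vertex `x`. -/
def hasSections {p : ℕ} (g : Equiv.Perm (Vtx p)) (s : Fin p → Equiv.Perm (Vtx p)) : Prop :=
  ∀ (x : Fin p) (τ : Vtx p), g (x :: τ) = x :: s x τ

/-- `g` fixes the vertex `u` and acts on the subtree rooted at `u` as `s` (under the
natural identification of the subtree with the whole tree). -/
def sectionAt {p : ℕ} (u : Vtx p) (g s : Equiv.Perm (Vtx p)) : Prop :=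
  ∀ τ : Vtx p, g (u ++ τ) = u ++ s τ

/-- The pointwise stabiliser of the `n`-th level of the tree. -/
def levelStab (p : ℕ) (n : ℕ) : Subgroup (Equiv.Perm (Vtx p)) where
  carrier := {g | ∀ ω : Vtx p, ω.length = n → g ω = ω}
  one_mem' := fun _ _ => rfl
  mul_mem' := by
    intro f g hf hg ω hω
    have := hg ω hω
    simp only [Equiv.Perm.mul_apply, this]
    exact hf ω hω
  inv_mem' := by
    intro f hf ω hω
    have := hf ω hω
    calc f⁻¹ ω = f⁻¹ (f ω) := by rw [this]
    _ = ω := f.symm_apply_apply ω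

/-- Spherical transitivity: `G` acts transitively on every level of the tree. -/
def SphericallyTransitive (p : ℕ) (G : Subgroup (Equiv.Perm (Vtx p))) : Prop :=
  ∀ ω ω' : Vtx p, ω.length = ω'.length → ∃ g ∈ G, g ω = ω'

/-- `G` is fractal: it is spherically transitive and for every vertex `u`, the
restriction to the subtree rooted at `u` of the stabiliser of `u` in `G` is `G` itself. -/
def Fractal (p : ℕ) (G : Subgroup (Equiv.Perm (Vtx p))) : Prop :=
  SphericallyTransitive p G ∧
    ∀ (u : Vtx p) (s : Equiv.Perm (Vtx p)), s ∈ G ↔ ∃ g ∈ G, sectionAt u g s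

/-- `G` is regular branch over `K`: `G` is fractal, `K` is a non-trivial subgroup of
`Stab_G(1)` of finite index in `G`, and `K × ⋯ × K ⊆ ψ₁(K)`. -/
def RegularBranch (p : ℕ) (G K : Subgroup (Equiv.Perm (Vtx p))) : Prop :=
  Fractal p G ∧ K ≠ ⊥ ∧ K ≤ G ⊓ levelStab p 1 ∧ K.relIndex G ≠ 0 ∧
    ∀ s : Fin p → Equiv.Perm (Vtx p), (∀ x, s x ∈ K) → ∃ g ∈ K, hasSections g s

/-- The third term `γ₃(H) = [[H,H],H]` of the lower central series. -/
def gamma3 {Γ : Type*} [Group Γ] (H : Subgroup Γ) : Subgroup Γ := ⁅(⁅H, H⁆ : Subgroup Γ), H⁆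

/-- Rigid stabiliser (in the full permutation group) of the vertex `u`: permutations
fixing every vertex not having `u` as a prefix. -/
def rigidStab (p : ℕ) (u : Vtx p) : Subgroup (Equiv.Perm (Vtx p)) where
  carrier := {g | ∀ ω : Vtx p, ¬ u <+: ω → g ω = ω}
  one_mem' := fun _ _ => rfl
  mul_mem' := by
    intro f g hf hg ω hω
    have := hg ω hω
    simp only [Equiv.Perm.mul_apply, this]
    exact hf ω hω
  inv_mem' := by
    intro f hf ω hω
    have := hf ω hω
    calc f⁻¹ ω = f⁻¹ (f ω) := by rw [this]
    _ = ω := f.symm_apply_apply ω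

/-- The rigid `n`-th level stabiliser of `G`: the subgroup generated by (equivalently,
the product of) the rigid vertex stabilisers of the vertices at level `n`. -/
def rigidLevelStab (p : ℕ) (G : Subgroup (Equiv.Perm (Vtx p))) (n : ℕ) :
    Subgroup (Equiv.Perm (Vtx p)) :=
  ⨆ u ∈ {u : Vtx p | u.length = n}, (G ⊓ rigidStab p u)

/-- `G` is a branch group (with respect to its action on the regular rooted tree). -/
def Branch (p : ℕ) (G : Subgroup (Equiv.Perm (Vtx p))) : Prop :=
  SphericallyTransitive p G ∧ ∀ n : ℕ, (rigidLevelStab p G n).relIndex G ≠ 0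

/-- An infinite group all of whose proper quotients are finite. -/
def JustInfinite {Γ : Type*} [Group Γ] (G : Subgroup Γ) : Prop :=
  (G : Set Γ).Infinite ∧
    ∀ N : Subgroup ↥G, N.Normal → N ≠ ⊥ → N.FiniteIndex

/-- The conjugate subgroup `x H x⁻¹`. -/
def conjSub {Γ : Type*} [Group Γ] (x : Γ) (H : Subgroup Γ) : Subgroup Γ :=
  H.map (MulAut.conj x).toMonoidHom

/-- `M` is a dense subgroup of `G` with respect to the profinite topology on `G`:
`NM = G` for every normal subgroup `N` of `G` of finite index. -/
def DenseIn {Γ : Type*} [Group Γ] (M G : Subgroup Γ) : Prop :=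
  M ≤ G ∧ ∀ N : Subgroup Γ, N ≤ G → (N.subgroupOf G).Normal → N.relIndex G ≠ 0 →
    G ≤ N ⊔ M

/-- The restriction to the subtree rooted at `u` of the stabiliser of `u` in `M`
(the "upper companion" subgroup `M_u`), under the identification of the subtree with
the whole tree. -/
def restrAt (p : ℕ) (u : Vtx p) (M : Subgroup (Equiv.Perm (Vtx p))) :
    Subgroup (Equiv.Perm (Vtx p)) where
  carrier := {s | ∃ g ∈ M, sectionAt u g s}
  one_mem' := ⟨1, M.one_mem, fun τ => rfl⟩
  mul_mem' := by
    rintro s s' ⟨g, hg, hgs⟩ ⟨g', hg', hgs'⟩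
    refine ⟨g * g', M.mul_mem hg hg', fun τ => ?_⟩
    simp only [Equiv.Perm.mul_apply, hgs' τ, hgs (s' τ)]
  inv_mem' := by
    rintro s ⟨g, hg, hgs⟩
    refine ⟨g⁻¹, M.inv_mem hg, fun τ => ?_⟩
    have h1 : g (u ++ s⁻¹ τ) = u ++ τ := by
      rw [hgs (s⁻¹ τ)]
      simp
    calc g⁻¹ (u ++ τ) = g⁻¹ (g (u ++ s⁻¹ τ)) := by rw [h1]
    _ = u ++ s⁻¹ τ := g.symm_apply_apply _

/-- Index `p - i` (`0`-indexed version of `i ↦ p - i` on `{1, …, p-1}`). -/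
def revIdx {p : ℕ} (k : Fin (p - 1)) : Fin (p - 1) :=
  ⟨p - 2 - k.val, by have := k.isLt; omega⟩


/-- Non-constancy of a defining vector. -/
def IsNonConstant {p : ℕ} (v : Fin (p - 1) → ZMod p) : Prop :=
  ¬ ∃ α : ZMod p, ∀ k, v k = α

/-- The regularity condition defining the subclass `𝒞_reg`: every non-empty family
of defining vectors contains a non-constant vector. -/
def SpinalData.IsReg {p : ℕ} (D : SpinalData p) : Prop :=
  ∀ j, D.r j ≠ 0 → ∃ i, IsNonConstant (D.e j i)

/-- Non-symmetry of a defining vector: `e_i ≠ e_{p-i}` for some `i`. -/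
def IsNonSymmetric {p : ℕ} (v : Fin (p - 1) → ZMod p) : Prop :=
  ∃ k, v k ≠ v (revIdx k)

/-- Membership in the class `𝒞`: subgroups of `Aut(T)` conjugate to a generalised
multi-edge spinal group in standard form. -/
def inC (p : ℕ) [NeZero p] (hp1 : 1 < p) (G : Subgroup (Equiv.Perm (Vtx p))) : Prop :=
  ∃ (D : SpinalData p) (x : Equiv.Perm (Vtx p)), x ∈ treeAut p ∧
    G = (D.grp hp1).map (MulAut.conj x).toMonoidHom

/-- Membership in the subclass `𝒞_reg`. -/
def inCreg (p : ℕ) [NeZero p] (hp1 : 1 < p) (G : Subgroup (Equiv.Perm (Vtx p))) : Prop :=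
  ∃ (D : SpinalData p) (x : Equiv.Perm (Vtx p)), x ∈ treeAut p ∧ D.IsReg ∧
    G = (D.grp hp1).map (MulAut.conj x).toMonoidHom

/-- The subgroup `⟨b^{(j)}_1, …, b^{(j)}_{r_j}⟩` generated by the `j`-th family of
directed generators. -/
def SpinalData.bFam {p : ℕ} [NeZero p] (D : SpinalData p) (hp1 : 1 < p) (j : Fin p) :
    Subgroup (Equiv.Perm (Vtx p)) :=
  Subgroup.closure (Set.range (D.gen hp1 j))

/-- `g` can be written as an alternating product
`c₀ d₀ c₁ d₁ ⋯ c_{N-1} d_{N-1} c_N` with each `cₖ` a power of `a` and each `dₖ` an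
element of one of the groups `⟨𝐛^{(j)}⟩`; the number of directed syllables is `N`. -/
def lenWitness {p : ℕ} [NeZero p] (D : SpinalData p) (hp1 : 1 < p)
    (g : Equiv.Perm (Vtx p)) (N : ℕ) : Prop :=
  ∃ (c : Fin (N + 1) → Equiv.Perm (Vtx p)) (d : Fin N → Equiv.Perm (Vtx p)),
    (∀ k, c k ∈ Subgroup.zpowers (aAut p)) ∧
    (∀ k, ∃ j, d k ∈ D.bFam hp1 j) ∧
    g = (List.ofFn fun k : Fin N => c k.castSucc * d k).prod * c (Fin.last N)

/-- The length `∂(g)`: the minimal number of directed syllables needed to express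
`g`; this coincides with the minimum over all preimages of `g` in the free product
`⟨â⟩ * ⟨𝐛̂^{(1)}⟩ * ⋯ * ⟨𝐛̂^{(p)}⟩` of the number of syllables of the normal form
lying in the directed factors. -/
noncomputable def dlen {p : ℕ} [NeZero p] (D : SpinalData p) (hp1 : 1 < p)
    (g : Equiv.Perm (Vtx p)) : ℕ :=
  sInf {N | lenWitness D hp1 g N}

set_option linter.unusedSectionVars false

section Aux1

open Fin.NatCast

variable {p : ℕ} [NeZero p]

theorem applyP_const_one : ∀ ω : Vtx p, applyP (fun _ => (1 : Equiv.Perm (Fin p))) ω = ω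
  | [] => rfl
  | x :: ω => by
      simp only [applyP, Equiv.Perm.one_apply]
      exact congrArg (x :: ·) (applyP_const_one ω)

theorem toPerm_apply (f : Vtx p → Equiv.Perm (Fin p)) (ω : Vtx p) :
    toPerm f ω = applyP f ω := rfl

theorem aAut_nil : aAut p [] = [] := rfl

theorem rootCycle_apply (x : Fin p) : rootCycle p x = x + 1 := rfl

theorem aAut_cons (x : Fin p) (τ : Vtx p) : aAut p (x :: τ) = (x + 1) :: τ := by
  have h : aAut p (x :: τ) = rootCycle p x :: applyP (fun _ => (1 : Equiv.Perm (Fin p))) τ := rfl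
  rw [h, applyP_const_one, rootCycle_apply]

theorem aAut_pow_nil (n : ℕ) : (aAut p ^ n) [] = [] := by
  induction n with
  | zero => rfl
  | succ n ih => rw [pow_succ, Equiv.Perm.mul_apply, aAut_nil, ih]

theorem rootCycle_pow_apply (n : ℕ) (x : Fin p) : (rootCycle p ^ n) x = x + (n : Fin p) := by
  induction n with
  | zero => simp
  | succ n ih =>
      rw [pow_succ', Equiv.Perm.mul_apply, ih, rootCycle_apply, Nat.cast_add, Nat.cast_one,
        add_assoc]

theorem rootCycle_pow_eq_one_iff (n : ℕ) : rootCycle p ^ n = 1 ↔ p ∣ n := by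
  constructor
  · intro h
    have := congrArg (fun g : Equiv.Perm (Fin p) => g 0) h
    simp only [rootCycle_pow_apply, Equiv.Perm.one_apply, zero_add] at this
    exact Fin.natCast_eq_zero.mp this
  · intro h
    refine Equiv.ext fun x => ?_
    rw [rootCycle_pow_apply, Fin.natCast_eq_zero.mpr h, add_zero, Equiv.Perm.one_apply]

theorem aAut_pow_cons (n : ℕ) (x : Fin p) (τ : Vtx p) :
    (aAut p ^ n) (x :: τ) = ((rootCycle p ^ n) x) :: τ := by
  induction n with
  | zero => rfl
  | succ n ih =>
      rw [pow_succ', Equiv.Perm.mul_apply, ih, aAut_cons, pow_succ', Equiv.Perm.mul_apply,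
        rootCycle_apply]

theorem aAut_pow_p : aAut p ^ p = 1 := by
  refine Equiv.ext fun ω => ?_
  cases ω with
  | nil => rw [aAut_pow_nil]; rfl
  | cons x τ =>
      rw [aAut_pow_cons, (rootCycle_pow_eq_one_iff p).mpr dvd_rfl, Equiv.Perm.one_apply]
      rfl

theorem dirAut_nil (hp1 : 1 < p) (c : Fin p) (e : Fin (p - 1) → ZMod p) :
    dirAut hp1 c e [] = [] := rfl

theorem dirAut_cons_eq (hp1 : 1 < p) (c : Fin p) (e : Fin (p - 1) → ZMod p) (τ : Vtx p) :
    dirAut hp1 c e (c :: τ) = c :: dirAut hp1 c e τ := by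
  simp only [dirAut]
  rw [toPerm_apply]
  simp only [applyP]
  refine congrArg₂ (· :: ·) rfl ?_
  have : (fun σ => dirPort hp1 c e (c :: σ)) = dirPort hp1 c e := by
    funext σ
    cases σ with
    | nil => simp [dirPort]
    | cons y ω => simp [dirPort]
  rw [this]
  rfl

theorem dirAut_cons_ne (hp1 : 1 < p) {x c : Fin p} (hx : x ≠ c) (e : Fin (p - 1) → ZMod p)
    (τ : Vtx p) :
    dirAut hp1 c e (x :: τ) =
      x :: (aAut p ^ (e (offIdx hp1 (x - c))).val) τ := by
  simp only [dirAut]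
  rw [toPerm_apply]
  simp only [applyP]
  refine congrArg₂ (· :: ·) rfl ?_
  cases τ with
  | nil => rw [aAut_pow_nil]; rfl
  | cons y ω =>
      simp only [applyP, dirPort, if_neg hx]
      rw [aAut_pow_cons]
      refine congrArg₂ (· :: ·) rfl ?_
      exact applyP_const_one ω

theorem dirAut_pow_cons_ne (hp1 : 1 < p) {x c : Fin p} (hx : x ≠ c)
    (e : Fin (p - 1) → ZMod p) (τ : Vtx p) (n : ℕ) :
    (dirAut hp1 c e ^ n) (x :: τ) =
      x :: (aAut p ^ ((e (offIdx hp1 (x - c))).val * n)) τ := by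
  induction n with
  | zero => rfl
  | succ n ih =>
      rw [pow_succ', Equiv.Perm.mul_apply, ih, dirAut_cons_ne hp1 hx, ← Equiv.Perm.mul_apply,
        ← pow_add]
      ring_nf

theorem dirAut_pow_cons_eq (hp1 : 1 < p) (c : Fin p) (e : Fin (p - 1) → ZMod p)
    (τ : Vtx p) (n : ℕ) :
    (dirAut hp1 c e ^ n) (c :: τ) = c :: (dirAut hp1 c e ^ n) τ := by
  induction n with
  | zero => rfl
  | succ n ih =>
      rw [pow_succ', Equiv.Perm.mul_apply, ih, dirAut_cons_eq, ← Equiv.Perm.mul_apply, ← pow_succ']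

theorem dirAut_pow_nil (hp1 : 1 < p) (c : Fin p) (e : Fin (p - 1) → ZMod p) (n : ℕ) :
    (dirAut hp1 c e ^ n) [] = [] := by
  induction n with
  | zero => rfl
  | succ n ih => rw [pow_succ, Equiv.Perm.mul_apply, dirAut_nil, ih]

theorem dirAut_pow_p (hp1 : 1 < p) (c : Fin p) (e : Fin (p - 1) → ZMod p) :
    dirAut hp1 c e ^ p = 1 := by
  refine Equiv.ext fun ω => ?_
  rw [Equiv.Perm.one_apply]
  induction ω with
  | nil => exact dirAut_pow_nil hp1 c e p
  | cons x τ ih =>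
      by_cases hx : x = c
      · subst hx
        rw [dirAut_pow_cons_eq, ih]
      · rw [dirAut_pow_cons_ne hp1 hx, mul_comm, pow_mul,
          aAut_pow_p, one_pow, Equiv.Perm.one_apply]

end Aux1
section Aux2

open Fin.NatCast

variable {p : ℕ} [NeZero p]

/-- Letters: `none` is the rooted generator `a`, `some ⟨j,i⟩` is `b^{(j)}_i`. -/
abbrev Ltr (p : ℕ) (D : SpinalData p) : Type := Option ((j : Fin p) × Fin (D.r j))

variable {D : SpinalData p}

def lgen (hp1 : 1 < p) (D : SpinalData p) : Ltr p D → Equiv.Perm (Vtx p)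
  | none => aAut p
  | some s => D.gen hp1 s.1 s.2

def evalW (hp1 : 1 < p) (l : List (Ltr p D)) : Equiv.Perm (Vtx p) :=
  (l.map (lgen hp1 D)).prod

def letterSect (hp1 : 1 < p) (D : SpinalData p) : Ltr p D → Fin p → List (Ltr p D)
  | none, _ => []
  | some s, y =>
      if y = pathLetter s.1 then [some s]
      else List.replicate (D.e s.1 s.2 (offIdx hp1 (y - pathLetter s.1))).val none

def sect (hp1 : 1 < p) (x : Fin p) : List (Ltr p D) → List (Ltr p D)
  | [] => []
  | u :: l => letterSect hp1 D u ((rootCycle p ^ (l.count none)) x) ++ sect hp1 x l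

variable (hp1 : 1 < p)

theorem evalW_nil : evalW (D := D) hp1 [] = 1 := rfl

theorem evalW_cons (u : Ltr p D) (l : List (Ltr p D)) :
    evalW hp1 (u :: l) = lgen hp1 D u * evalW hp1 l := by
  simp [evalW]

theorem evalW_append (l₁ l₂ : List (Ltr p D)) :
    evalW hp1 (l₁ ++ l₂) = evalW hp1 l₁ * evalW hp1 l₂ := by
  simp [evalW]

theorem evalW_replicate_none (k : ℕ) :
    evalW (D := D) hp1 (List.replicate k none) = aAut p ^ k := by
  simp [evalW, lgen]

theorem eval_cons_sect (l : List (Ltr p D)) (x : Fin p) (τ : Vtx p) :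
    evalW hp1 l (x :: τ) =
      ((rootCycle p ^ (l.count none)) x) :: evalW hp1 (sect hp1 x l) τ := by
  induction l with
  | nil => simp [evalW, sect]
  | cons u l ih =>
      rw [evalW_cons, Equiv.Perm.mul_apply, ih]
      cases u with
      | none =>
          show aAut p _ = _
          rw [aAut_cons]
          have hc : (none :: l).count (none : Ltr p D) = l.count none + 1 :=
            List.count_cons_self
          have hs : sect hp1 x (none :: l) = sect hp1 x l := rfl
          rw [hc, hs]
          refine congrArg₂ (· :: ·) ?_ rfl
          simp only [rootCycle_pow_apply, rootCycle_apply]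
          push_cast
          abel
      | some s =>
          have hc : (some s :: l).count (none : Ltr p D) = l.count none := by
            rw [List.count_cons, if_neg (by simp)]; ring
          have hgen : lgen hp1 D (some s) = dirAut hp1 (pathLetter s.1) (D.e s.1 s.2) := rfl
          by_cases h : (rootCycle p ^ l.count (none : Ltr p D)) x = pathLetter s.1
          · have hs : sect hp1 x (some s :: l) = some s :: sect hp1 x l := by
              show letterSect hp1 D (some s) _ ++ _ = _
              rw [letterSect, if_pos h]; rfl
            rw [hs, hc, evalW_cons, Equiv.Perm.mul_apply, hgen, h, dirAut_cons_eq]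
          · have hs : sect hp1 x (some s :: l) =
                List.replicate (D.e s.1 s.2 (offIdx hp1
                  ((rootCycle p ^ l.count (none : Ltr p D)) x - pathLetter s.1))).val none
                  ++ sect hp1 x l := by
              show letterSect hp1 D (some s) _ ++ _ = _
              rw [letterSect, if_neg h]
            rw [hs, hc, evalW_append, evalW_replicate_none, Equiv.Perm.mul_apply, hgen,
              dirAut_cons_ne hp1 h]

theorem dvd_count_none {l : List (Ltr p D)} (h : evalW hp1 l = 1) :
    p ∣ l.count none := by
  rw [← rootCycle_pow_eq_one_iff]
  refine Equiv.ext fun x => ?_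
  have := eval_cons_sect hp1 l x []
  rw [h, Equiv.Perm.one_apply] at this
  exact (List.cons.injEq _ _ _ _ ▸ this).1.symm

theorem eval_sect_eq_one {l : List (Ltr p D)} (h : evalW hp1 l = 1) (x : Fin p) :
    evalW hp1 (sect hp1 x l) = 1 := by
  refine Equiv.ext fun τ => ?_
  have := eval_cons_sect hp1 l x τ
  rw [h, Equiv.Perm.one_apply] at this
  exact ((List.cons.injEq _ _ _ _ ▸ this).2).symm

end Aux2
section Aux3

variable {p : ℕ} [NeZero p] {D : SpinalData p}

/-- Number of directed letters. -/
def bnum (l : List (Ltr p D)) : ℕ := l.countP (fun u => u.isSome)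

variable (hp1 : 1 < p)

theorem bnum_nil : bnum ([] : List (Ltr p D)) = 0 := rfl

theorem bnum_append (l₁ l₂ : List (Ltr p D)) : bnum (l₁ ++ l₂) = bnum l₁ + bnum l₂ :=
  List.countP_append

theorem bnum_replicate_none (k : ℕ) : bnum (List.replicate k (none : Ltr p D)) = 0 := by
  simp [bnum]

theorem bnum_letterSect_le (u : Ltr p D) (y : Fin p) :
    bnum (letterSect hp1 D u y) ≤ 1 := by
  cases u with
  | none => exact Nat.zero_le 1
  | some s =>
      rw [letterSect]
      by_cases h : y = pathLetter s.1
      · rw [if_pos h]; exact le_refl 1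
      · rw [if_neg h, bnum_replicate_none]; exact Nat.zero_le 1

theorem bnum_cons_none (l : List (Ltr p D)) : bnum (none :: l) = bnum l := by
  simp [bnum, List.countP_cons]

theorem bnum_cons_some (s : (j : Fin p) × Fin (D.r j)) (l : List (Ltr p D)) :
    bnum (some s :: l) = bnum l + 1 := by
  simp [bnum, List.countP_cons]

theorem sect_cons (u : Ltr p D) (x : Fin p) (l : List (Ltr p D)) :
    sect hp1 x (u :: l) =
      letterSect hp1 D u ((rootCycle p ^ (l.count none)) x) ++ sect hp1 x l := rfl

theorem bnum_sect_le (x : Fin p) (l : List (Ltr p D)) :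
    bnum (sect hp1 x l) ≤ bnum l := by
  induction l with
  | nil => exact le_refl 0
  | cons u l ih =>
      rw [sect_cons, bnum_append]
      cases u with
      | none =>
          rw [bnum_cons_none]
          have h0 : bnum (letterSect hp1 D (none : Ltr p D)
              ((rootCycle p ^ (l.count (none : Ltr p D))) x)) = 0 := rfl
          omega
      | some s =>
          rw [bnum_cons_some]
          have := bnum_letterSect_le hp1 (some s) ((rootCycle p ^ (l.count (none : Ltr p D))) x)
          omega

theorem sect_eq_filter (x : Fin p) (l : List (Ltr p D))
    (h : bnum (sect hp1 x l) = bnum l) :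
    sect hp1 x l = l.filter (fun u => u.isSome) := by
  induction l with
  | nil => rfl
  | cons u l ih =>
      rw [sect_cons, bnum_append] at h
      rw [sect_cons]
      cases u with
      | none =>
          rw [bnum_cons_none] at h
          have h0 : bnum (letterSect hp1 D (none : Ltr p D)
              ((rootCycle p ^ (l.count (none : Ltr p D))) x)) = 0 := rfl
          rw [h0, zero_add] at h
          rw [List.filter_cons_of_neg (by simp)]
          exact ih h
      | some s =>
          by_cases hy : (rootCycle p ^ (l.count (none : Ltr p D))) x = pathLetter s.1
          · have hl : letterSect hp1 D (some s) ((rootCycle p ^ (l.count (none : Ltr p D))) x)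
                = [some s] := by rw [letterSect, if_pos hy]
            rw [hl] at h ⊢
            have h1 : bnum [(some s : Ltr p D)] = 1 := rfl
            have h2 := bnum_cons_some s l
            rw [h1, h2] at h
            rw [List.filter_cons_of_pos (by simp)]
            rw [List.singleton_append]
            exact congrArg _ (ih (by omega))
          · have hl : letterSect hp1 D (some s) ((rootCycle p ^ (l.count (none : Ltr p D))) x)
                = List.replicate (D.e s.1 s.2 (offIdx hp1 (((rootCycle p ^
                    (l.count (none : Ltr p D))) x) - pathLetter s.1))).val none := by
              rw [letterSect, if_neg hy]
            rw [hl, bnum_replicate_none, zero_add, bnum_cons_some] at h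
            have := bnum_sect_le hp1 x l
            omega

theorem sum_count_sect (s0 : (j : Fin p) × Fin (D.r j)) (l : List (Ltr p D)) :
    ∑ x : Fin p, (sect hp1 x l).count (some s0) = l.count (some s0) := by
  induction l with
  | nil => simp [sect]
  | cons u l ih =>
      have : ∀ x : Fin p, (sect hp1 x (u :: l)).count (some s0) =
          (letterSect hp1 D u ((rootCycle p ^ (l.count none)) x)).count (some s0) +
            (sect hp1 x l).count (some s0) := fun x => by
        rw [sect_cons, List.count_append]
      simp only [this]
      rw [Finset.sum_add_distrib, ih]
      have hcomp : ∑ x : Fin p,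
          (letterSect hp1 D u ((rootCycle p ^ (l.count (none : Ltr p D))) x)).count (some s0)
          = ∑ y : Fin p, (letterSect hp1 D u y).count (some s0) :=
        Equiv.sum_comp (rootCycle p ^ (l.count (none : Ltr p D)))
          (fun y => (letterSect hp1 D u y).count (some s0))
      rw [hcomp]
      cases u with
      | none =>
          have hnil : ∀ y : Fin p, letterSect hp1 D (none : Ltr p D) y = [] := fun _ => rfl
          simp only [hnil, List.count_nil, Finset.sum_const_zero, zero_add, List.count_cons]
          simp
      | some s =>
          have hval : ∀ y : Fin p, (letterSect hp1 D (some s) y).count (some s0) =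
              if y = pathLetter s.1 then (if some s0 = some s then 1 else 0) else 0 := by
            intro y
            rw [letterSect]
            by_cases hy : y = pathLetter s.1
            · rw [if_pos hy, if_pos hy]
              by_cases hss : some s0 = some s
              · rw [if_pos hss, hss, List.count_singleton]
                · simp
              · rw [if_neg hss, List.count_eq_zero_of_not_mem (by
                  simpa using fun h' => hss (by rw [h']))]
            · rw [if_neg hy, if_neg hy, List.count_replicate, if_neg (by simp)]
          simp only [hval]
          rw [Finset.sum_ite_eq' Finset.univ (pathLetter s.1)
            (fun _ => if some s0 = some s then 1 else 0), if_pos (Finset.mem_univ _),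
            List.count_cons]
          simp only [beq_iff_eq]
          by_cases hss : some s = some s0
          · rw [if_pos hss, if_pos hss.symm, Nat.add_comm]
          · rw [if_neg hss, if_neg (fun h' => hss h'.symm), Nat.add_comm]

end Aux3
section Aux4

variable {p : ℕ} [NeZero p] {D : SpinalData p}

theorem pathLetter_injective : Function.Injective (pathLetter (p := p)) := by
  intro j j' h
  have h2 : (j : Fin p) + 1 = j' + 1 := neg_injective h
  exact add_right_cancel h2

theorem pathLetter_surjective : Function.Surjective (pathLetter (p := p)) :=
  Finite.surjective_of_injective pathLetter_injective

/-- Does the directed letter `u` have its spine at first-level vertex `x`? -/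
def tpred (x : Fin p) : Ltr p D → Bool :=
  fun u => u.elim false (fun s => decide (x = pathLetter s.1))

/-- Weight of a letter at first-level vertex `x` (`a`-exponent of its section there). -/
def wfn (hp1 : 1 < p) (D : SpinalData p) (x : Fin p) : Ltr p D → ℕ :=
  fun u => u.elim 0 (fun s => (D.e s.1 s.2 (offIdx hp1 (x - pathLetter s.1))).val)

variable (hp1 : 1 < p)

theorem count_none_eq_zero_of_pure {l : List (Ltr p D)} (hl : ∀ u ∈ l, u.isSome = true) :
    l.count none = 0 :=
  List.count_eq_zero.mpr (fun h => by simpa using hl none h)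

theorem sect_cons_pure (x : Fin p) (u : Ltr p D) {l : List (Ltr p D)}
    (hl : l.count (none : Ltr p D) = 0) :
    sect hp1 x (u :: l) = letterSect hp1 D u x ++ sect hp1 x l := by
  rw [sect_cons, hl, pow_zero]
  rfl

theorem bnum_sect_pure (x : Fin p) (l : List (Ltr p D)) (hl : ∀ u ∈ l, u.isSome = true) :
    bnum (sect hp1 x l) = l.countP (tpred x) := by
  induction l with
  | nil => rfl
  | cons u l ih =>
      have hl' : ∀ v ∈ l, Option.isSome v = true := fun v hv => hl v (List.mem_cons_of_mem _ hv)
      rw [sect_cons_pure hp1 x u (count_none_eq_zero_of_pure hl'), bnum_append,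
        List.countP_cons, ih hl']
      cases u with
      | none => exact absurd (hl none (List.mem_cons_self)) (by simp)
      | some s =>
          rw [letterSect]
          by_cases h : x = pathLetter s.1
          · rw [if_pos h]
            have h1 : bnum [(some s : Ltr p D)] = 1 := rfl
            have h2 : tpred (D := D) x (some s) = true := by simp [tpred, h]
            rw [h1, h2, if_pos rfl, Nat.add_comm]
          · rw [if_neg h, bnum_replicate_none]
            have h2 : tpred (D := D) x (some s) = false := by simp [tpred, h]
            rw [h2]
            simp

theorem count_none_sect_pure (x : Fin p) (l : List (Ltr p D))
    (hl : ∀ u ∈ l, u.isSome = true)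
    (hx : ∀ s, some s ∈ l → x ≠ pathLetter s.1) :
    (sect hp1 x l).count none = (l.map (wfn hp1 D x)).sum := by
  induction l with
  | nil => rfl
  | cons u l ih =>
      have hl' : ∀ v ∈ l, Option.isSome v = true := fun v hv => hl v (List.mem_cons_of_mem _ hv)
      have hx' : ∀ s, some s ∈ l → x ≠ pathLetter s.1 := fun s hs =>
        hx s (List.mem_cons_of_mem _ hs)
      rw [sect_cons_pure hp1 x u (count_none_eq_zero_of_pure hl'), List.count_append,
        List.map_cons, List.sum_cons, ih hl' hx']
      cases u with
      | none => exact absurd (hl none (List.mem_cons_self)) (by simp)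
      | some s =>
          rw [letterSect, if_neg (hx s (List.mem_cons_self)), List.count_replicate]
          simp [wfn]

theorem sum_map_wfn_cast (x : Fin p) (j0 : Fin p) (l : List (Ltr p D))
    (hl : ∀ u ∈ l, ∃ i, u = some ⟨j0, i⟩) :
    (((l.map (wfn hp1 D x)).sum : ℕ) : ZMod p) =
      ∑ i : Fin (D.r j0), (l.count (some ⟨j0, i⟩) : ZMod p) *
        D.e j0 i (offIdx hp1 (x - pathLetter j0)) := by
  induction l with
  | nil => simp
  | cons u l ih =>
      have hl' : ∀ v ∈ l, ∃ i, v = some ⟨j0, i⟩ := fun v hv => hl v (List.mem_cons_of_mem _ hv)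
      obtain ⟨i0, rfl⟩ := hl u (List.mem_cons_self)
      rw [List.map_cons, List.sum_cons, Nat.cast_add, ih hl']
      have hw : wfn hp1 D x (some ⟨j0, i0⟩) =
          (D.e j0 i0 (offIdx hp1 (x - pathLetter j0))).val := rfl
      rw [hw, ZMod.natCast_rightInverse _]
      have hcnt : ∀ i : Fin (D.r j0),
          ((some ⟨j0, i0⟩ :: l).count (some ⟨j0, i⟩) : ZMod p) =
            (l.count (some ⟨j0, i⟩) : ZMod p) + (if i = i0 then 1 else 0) := by
        intro i
        rw [List.count_cons]
        by_cases hii : i = i0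
        · subst hii
          rw [if_pos (by simp), if_pos rfl]
          push_cast
          ring
        · rw [if_neg (by simp; exact fun h => hii h.symm), if_neg hii]
          push_cast
          ring
      simp only [hcnt]
      have : ∑ i : Fin (D.r j0),
          ((l.count (some ⟨j0, i⟩) : ZMod p) + (if i = i0 then 1 else 0)) *
            D.e j0 i (offIdx hp1 (x - pathLetter j0)) =
          (∑ i : Fin (D.r j0), (l.count (some ⟨j0, i⟩) : ZMod p) *
            D.e j0 i (offIdx hp1 (x - pathLetter j0))) +
          ∑ i : Fin (D.r j0), (if i = i0 then 1 else 0) *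
            D.e j0 i (offIdx hp1 (x - pathLetter j0)) := by
        rw [← Finset.sum_add_distrib]
        refine Finset.sum_congr rfl fun i _ => ?_
        ring
      rw [this, show ∑ i : Fin (D.r j0), (if i = i0 then 1 else 0) *
            D.e j0 i (offIdx hp1 (x - pathLetter j0)) =
          D.e j0 i0 (offIdx hp1 (x - pathLetter j0)) from by
        rw [Finset.sum_eq_single i0]
        · rw [if_pos rfl, one_mul]
        · intro b _ hb; rw [if_neg hb, zero_mul]
        · intro h; exact absurd (Finset.mem_univ i0) h]
      ring

theorem exists_offIdx (c : Fin p) (k : Fin (p - 1)) :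
    ∃ x : Fin p, x ≠ c ∧ offIdx hp1 (x - c) = k := by
  have hk : k.val + 1 < p := by have := k.isLt; omega
  refine ⟨c + ⟨k.val + 1, hk⟩, ?_, ?_⟩
  · intro h
    have h0 : (⟨k.val + 1, hk⟩ : Fin p) = 0 := by
      have := add_eq_left.mp h
      exact this
    exact absurd (congrArg Fin.val h0) (by simp)
  · rw [add_sub_cancel_left]
    simp [offIdx]

theorem count_le_bnum (s0 : (j : Fin p) × Fin (D.r j)) (l : List (Ltr p D)) :
    l.count (some s0) ≤ bnum l := by
  rw [List.count_eq_countP]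
  exact List.countP_mono_left (fun u _ h => by
    rw [eq_of_beq h]; rfl)

theorem main_dvd (N : ℕ) : ∀ l : List (Ltr p D), bnum l ≤ N → evalW hp1 l = 1 →
    ∀ s0 : (j : Fin p) × Fin (D.r j), p ∣ l.count (some s0) := by
  induction N with
  | zero =>
      intro l hN _ s0
      have h1 := count_le_bnum s0 l
      have h0 : l.count (some s0) = 0 := by omega
      rw [h0]
      exact dvd_zero p
  | succ N ih =>
      intro l hN hev s0
      by_cases hbig : ∃ x0 : Fin p, bnum (sect hp1 x0 l) = bnum l
      · obtain ⟨x0, hx0⟩ := hbig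
        have hfil : sect hp1 x0 l = l.filter (fun u => u.isSome) :=
          sect_eq_filter hp1 x0 l hx0
        set l' := sect hp1 x0 l with hl'def
        have hev' : evalW hp1 l' = 1 := eval_sect_eq_one hp1 hev x0
        have hpure : ∀ u ∈ l', u.isSome = true := by
          rw [hfil]; intro u hu; exact List.of_mem_filter hu
        have hcount : ∀ s1 : (j : Fin p) × Fin (D.r j),
            l'.count (some s1) = l.count (some s1) := by
          intro s1
          rw [hfil, List.count_filter (by rfl)]
        have hbnl : bnum l' = bnum l := hx0
        rw [← hcount s0]
        by_cases hfam : ∃ j0 : Fin p, ∀ u ∈ l', ∃ i, u = some ⟨j0, i⟩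
        · -- single family: use linear independence
          obtain ⟨j0, hj0⟩ := hfam
          have hrel : ∀ k : Fin (p - 1),
              ∑ i : Fin (D.r j0), (l'.count (some ⟨j0, i⟩) : ZMod p) * D.e j0 i k = 0 := by
            intro k
            obtain ⟨x, hxne, hxk⟩ := exists_offIdx hp1 (pathLetter j0) k
            have hx' : ∀ s, some s ∈ l' → x ≠ pathLetter s.1 := by
              intro s hs hxeq
              obtain ⟨i, hi⟩ := hj0 _ hs
              have : s = ⟨j0, i⟩ := Option.some_injective _ hi
              rw [this] at hxeq
              exact hxne hxeq
            have h1 : p ∣ (sect hp1 x l').count none :=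
              dvd_count_none hp1 (eval_sect_eq_one hp1 hev' x)
            rw [count_none_sect_pure hp1 x l' hpure hx'] at h1
            have h2 := sum_map_wfn_cast hp1 x j0 l' hj0
            rw [hxk] at h2
            rw [(ZMod.natCast_eq_zero_iff _ p).mpr h1] at h2
            exact h2.symm
          have hzero : ∀ i : Fin (D.r j0), (l'.count (some ⟨j0, i⟩) : ZMod p) = 0 := by
            have hli := Fintype.linearIndependent_iff.mp (D.indep j0)
              (fun i => (l'.count (some ⟨j0, i⟩) : ZMod p))
            refine hli ?_
            funext k
            have := hrel k
            simpa [Finset.sum_apply] using this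
          rcases s0 with ⟨j1, i1⟩
          by_cases hj : j1 = j0
          · subst hj
            exact (ZMod.natCast_eq_zero_iff _ p).mp (hzero i1)
          · have : l'.count (some ⟨j1, i1⟩) = 0 := by
              rw [List.count_eq_zero]
              intro hmem
              obtain ⟨i, hi⟩ := hj0 _ hmem
              have := Option.some_injective _ hi
              exact hj (congrArg Sigma.fst this)
            rw [this]
            exact dvd_zero p
        · -- at least two families: all sections of `l'` are strictly shorter
          have hsmall : ∀ x : Fin p, bnum (sect hp1 x l') ≤ N := by
            intro x
            rw [bnum_sect_pure hp1 x l' hpure]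
            have hle : l'.countP (tpred x) ≤ l'.length := List.countP_le_length
            have hlen : bnum l' = l'.length := by
              rw [bnum, List.countP_eq_length]
              exact hpure
            have hne : l'.countP (tpred x) ≠ l'.length := by
              intro heq
              obtain ⟨j0, hj0x⟩ := pathLetter_surjective (p := p) x
              refine hfam ⟨j0, fun u hu => ?_⟩
              have hall := List.countP_eq_length.mp heq u hu
              rcases u with _ | s
              · simp [tpred] at hall
              · have hx : x = pathLetter s.1 := by
                  simpa [tpred] using hall
                have hjs : s.1 = j0 := pathLetter_injective (by rw [← hx, hj0x])
                rcases s with ⟨js, is⟩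
                exact ⟨hjs ▸ is, by subst hjs; rfl⟩
            omega
          have hdvd' : ∀ x, p ∣ (sect hp1 x l').count (some s0) := fun x =>
            ih _ (hsmall x) (eval_sect_eq_one hp1 hev' x) s0
          rw [← sum_count_sect hp1 s0 l']
          exact Finset.dvd_sum fun x _ => hdvd' x
      · have hlt : ∀ x, bnum (sect hp1 x l) ≤ N := by
          intro x
          have h1 := bnum_sect_le hp1 x l
          have h2 : bnum (sect hp1 x l) ≠ bnum l := fun h => hbig ⟨x, h⟩
          omega
        have hdvd : ∀ x, p ∣ (sect hp1 x l).count (some s0) := fun x =>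
          ih _ (hlt x) (eval_sect_eq_one hp1 hev x) s0
        rw [← sum_count_sect hp1 s0 l]
        exact Finset.dvd_sum fun x _ => hdvd x

end Aux4
section Aux5

variable {p : ℕ} [NeZero p] {D : SpinalData p}

/-- The target abelian group. -/
abbrev AbT (p : ℕ) (D : SpinalData p) : Type :=
  ZMod p × ((j : Fin p) → Fin (D.r j) → ZMod p)

/-- Exponent-vector of a single letter. -/
def tgt : Ltr p D → AbT p D :=
  fun u => u.elim (1, 0) (fun s => (0, Pi.single s.1 (Pi.single s.2 1)))

/-- Exponent-vector of a word, via letter counts. -/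
def csum (l : List (Ltr p D)) : AbT p D :=
  ((l.count none : ZMod p), fun j i => (l.count (some ⟨j, i⟩) : ZMod p))

theorem single_apply_sigma (s : (j : Fin p) × Fin (D.r j)) (j : Fin p) (i : Fin (D.r j)) :
    Pi.single (M := fun j => Fin (D.r j) → ZMod p) s.1 (Pi.single s.2 1) j i =
      if (⟨j, i⟩ : (j : Fin p) × Fin (D.r j)) = s then 1 else 0 := by
  rcases s with ⟨js, is⟩
  by_cases hj : js = j
  · subst hj
    rw [Pi.single_eq_same]
    by_cases hi : is = i
    · subst hi
      rw [Pi.single_eq_same, if_pos rfl]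
    · rw [Pi.single_eq_of_ne (fun h => hi h.symm),
        if_neg (fun hcond => hi (by simpa using hcond.symm))]
  · rw [Pi.single_eq_of_ne (fun h => hj h.symm),
      if_neg (fun hcond => hj (congrArg Sigma.fst hcond).symm)]
    rfl

theorem csum_nil : csum ([] : List (Ltr p D)) = 0 := by
  refine Prod.ext ?_ ?_
  · simp [csum]
  · funext j i
    simp [csum]

theorem csum_cons (v : Ltr p D) (l : List (Ltr p D)) : csum (v :: l) = tgt v + csum l := by
  refine Prod.ext ?_ ?_
  · show ((v :: l).count (none : Ltr p D) : ZMod p) = (tgt v).1 + (l.count none : ZMod p)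
    rw [List.count_cons]
    simp only [beq_iff_eq]
    cases v with
    | none =>
        rw [if_pos (by simp), show (tgt (D := D) none).1 = 1 from rfl]
        push_cast
        ring
    | some s =>
        rw [if_neg (by simp), show (tgt (D := D) (some s)).1 = 0 from rfl]
        push_cast
        ring
  · funext j i
    show ((v :: l).count (some ⟨j, i⟩) : ZMod p) =
      (tgt v).2 j i + (l.count (some ⟨j, i⟩) : ZMod p)
    rw [List.count_cons]
    simp only [beq_iff_eq]
    cases v with
    | none =>
        rw [if_neg (by simp), show (tgt (D := D) none).2 j i = 0 from rfl]
        push_cast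
        ring
    | some s =>
        rw [show (tgt (D := D) (some s)).2 j i =
          Pi.single (M := fun j => Fin (D.r j) → ZMod p) s.1 (Pi.single s.2 1) j i from rfl,
          single_apply_sigma]
        by_cases h : (⟨j, i⟩ : (j : Fin p) × Fin (D.r j)) = s
        · rw [if_pos h, if_pos (by rw [h]), Nat.cast_add, Nat.cast_one]
          ring
        · rw [if_neg h, if_neg (fun h' => h (Option.some_injective _ h').symm), Nat.add_zero]
          ring

theorem csum_append (l₁ l₂ : List (Ltr p D)) : csum (l₁ ++ l₂) = csum l₁ + csum l₂ := by
  refine Prod.ext ?_ ?_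
  · show ((l₁ ++ l₂).count (none : Ltr p D) : ZMod p) =
      (l₁.count none : ZMod p) + (l₂.count none : ZMod p)
    rw [List.count_append, Nat.cast_add]
  · funext j i
    show ((l₁ ++ l₂).count (some ⟨j, i⟩) : ZMod p) =
      (l₁.count (some ⟨j, i⟩) : ZMod p) + (l₂.count (some ⟨j, i⟩) : ZMod p)
    rw [List.count_append, Nat.cast_add]

theorem csum_replicate (n : ℕ) (u : Ltr p D) :
    csum (List.replicate n u) = n • tgt u := by
  induction n with
  | zero => rw [List.replicate_zero, csum_nil, zero_smul]
  | succ n ih => rw [List.replicate_succ, csum_cons, ih, succ_nsmul, add_comm]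

theorem smul_p_ab (a : AbT p D) : p • a = 0 := by
  refine Prod.ext ?_ ?_
  · show p • a.1 = 0
    rw [nsmul_eq_mul, ZMod.natCast_self, zero_mul]
  · funext j i
    show p • a.2 j i = 0
    rw [nsmul_eq_mul, ZMod.natCast_self, zero_mul]

theorem csum_replicate_pred (hp1 : 1 < p) (u : Ltr p D) :
    csum (List.replicate (p - 1) u) = - tgt u := by
  rw [csum_replicate]
  have h1 : (p - 1) • tgt (D := D) u + tgt u = 0 := by
    rw [← succ_nsmul, Nat.sub_add_cancel (by omega)]
    exact smul_p_ab _
  have := eq_neg_of_add_eq_zero_left h1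
  exact this

/-- Replace inverse letters by positive powers. -/
def unsign (D : SpinalData p) : List (Ltr p D × Bool) → List (Ltr p D)
  | [] => []
  | (u, true) :: L => u :: unsign D L
  | (u, false) :: L => List.replicate (p - 1) u ++ unsign D L

theorem lgen_pow_p (hp1 : 1 < p) (u : Ltr p D) : lgen hp1 D u ^ p = 1 := by
  cases u with
  | none => exact aAut_pow_p
  | some s => exact dirAut_pow_p hp1 _ _

theorem lgen_pow_pred (hp1 : 1 < p) (u : Ltr p D) :
    lgen hp1 D u ^ (p - 1) = (lgen hp1 D u)⁻¹ := by
  refine eq_inv_of_mul_eq_one_left ?_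
  rw [← pow_succ, Nat.sub_add_cancel (by omega), lgen_pow_p]

theorem evalW_replicate (hp1 : 1 < p) (n : ℕ) (u : Ltr p D) :
    evalW hp1 (List.replicate n u) = lgen hp1 D u ^ n := by
  simp [evalW]

theorem evalW_unsign (hp1 : 1 < p) (L : List (Ltr p D × Bool)) :
    evalW hp1 (unsign D L) =
      (L.map fun x => cond x.2 (lgen hp1 D x.1) (lgen hp1 D x.1)⁻¹).prod := by
  induction L with
  | nil => rfl
  | cons x L ih =>
      rcases x with ⟨u, b⟩
      cases b with
      | true =>
          rw [show unsign D ((u, true) :: L) = u :: unsign D L from rfl, evalW_cons, ih]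
          rfl
      | false =>
          rw [show unsign D ((u, false) :: L) = List.replicate (p - 1) u ++ unsign D L from rfl,
            evalW_append, evalW_replicate, lgen_pow_pred hp1, ih]
          rfl

theorem csum_unsign (hp1 : 1 < p) (L : List (Ltr p D × Bool)) :
    (L.map fun x => cond x.2 (tgt x.1) (-tgt x.1)).sum = csum (unsign D L) := by
  induction L with
  | nil => exact (csum_nil).symm
  | cons x L ih =>
      rcases x with ⟨u, b⟩
      rw [List.map_cons, List.sum_cons, ih]
      cases b with
      | true =>
          rw [show unsign D ((u, true) :: L) = u :: unsign D L from rfl, csum_cons]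
          rfl
      | false =>
          rw [show unsign D ((u, false) :: L) = List.replicate (p - 1) u ++ unsign D L from rfl,
            csum_append, csum_replicate_pred hp1]
          rfl

theorem prod_ofAdd_list (L : List (Ltr p D × Bool)) :
    (L.map fun x => cond x.2 (Multiplicative.ofAdd (tgt x.1))
        (Multiplicative.ofAdd (tgt x.1))⁻¹).prod =
      Multiplicative.ofAdd ((L.map fun x => cond x.2 (tgt x.1) (-tgt x.1)).sum) := by
  induction L with
  | nil => rfl
  | cons x L ih =>
      rcases x with ⟨u, b⟩
      rw [List.map_cons, List.prod_cons, ih, List.map_cons, List.sum_cons]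
      cases b with
      | true => rfl
      | false => rfl

theorem ker_lemma (hp1 : 1 < p) (w : FreeGroup (Ltr p D))
    (h : FreeGroup.lift (lgen hp1 D) w = 1) :
    FreeGroup.lift (fun u => Multiplicative.ofAdd (tgt (D := D) u)) w = 1 := by
  have hw : w = FreeGroup.mk w.toWord := FreeGroup.mk_toWord.symm
  rw [hw, FreeGroup.lift_mk] at h ⊢
  have hev : evalW hp1 (unsign D w.toWord) = 1 := by
    rw [evalW_unsign hp1]
    exact h
  have hn : p ∣ (unsign D w.toWord).count none := dvd_count_none hp1 hev
  have hs : ∀ s0 : (j : Fin p) × Fin (D.r j), p ∣ (unsign D w.toWord).count (some s0) :=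
    main_dvd hp1 (bnum (unsign D w.toWord)) _ le_rfl hev
  have hc : csum (unsign D w.toWord) = 0 := by
    refine Prod.ext ?_ ?_
    · show ((unsign D w.toWord).count (none : Ltr p D) : ZMod p) = 0
      exact (ZMod.natCast_eq_zero_iff _ p).mpr hn
    · funext j i
      show ((unsign D w.toWord).count (some ⟨j, i⟩) : ZMod p) = 0
      exact (ZMod.natCast_eq_zero_iff _ p).mpr (hs ⟨j, i⟩)
  rw [prod_ofAdd_list, csum_unsign hp1, hc]
  rfl

end Aux5
section Aux6

variable {p : ℕ} [NeZero p] {D : SpinalData p}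

theorem tgt_decomp (a : AbT p D) :
    a.1.val • tgt (D := D) none +
      ∑ s : (j : Fin p) × Fin (D.r j), (a.2 s.1 s.2).val • tgt (D := D) (some s) = a := by
  refine Prod.ext ?_ ?_
  · have h1 : (a.1.val • tgt (D := D) none +
        ∑ s : (j : Fin p) × Fin (D.r j), (a.2 s.1 s.2).val • tgt (D := D) (some s)).1 =
        a.1.val • (tgt (D := D) none).1 +
          ∑ s : (j : Fin p) × Fin (D.r j), (a.2 s.1 s.2).val • (tgt (D := D) (some s)).1 := by
      rw [Prod.fst_add, Prod.fst_sum]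
      rfl
    rw [h1, show (tgt (D := D) none).1 = 1 from rfl]
    have h2 : ∀ s : (j : Fin p) × Fin (D.r j), (tgt (D := D) (some s)).1 = 0 := fun _ => rfl
    simp only [h2, smul_zero, Finset.sum_const_zero, add_zero]
    rw [nsmul_eq_mul, mul_one]
    exact ZMod.natCast_rightInverse _
  · have h1 : (a.1.val • tgt (D := D) none +
        ∑ s : (j : Fin p) × Fin (D.r j), (a.2 s.1 s.2).val • tgt (D := D) (some s)).2 =
        a.1.val • (tgt (D := D) none).2 +
          ∑ s : (j : Fin p) × Fin (D.r j), (a.2 s.1 s.2).val • (tgt (D := D) (some s)).2 := by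
      rw [Prod.snd_add, Prod.snd_sum]
      rfl
    rw [h1, show (tgt (D := D) none).2 = 0 from rfl, smul_zero, zero_add]
    funext j i
    rw [Finset.sum_apply, Finset.sum_apply]
    have hterm : ∀ c : (j : Fin p) × Fin (D.r j),
        ((a.2 c.1 c.2).val • (tgt (D := D) (some c)).2) j i =
          (a.2 c.1 c.2).val •
            (if (⟨j, i⟩ : (j : Fin p) × Fin (D.r j)) = c then (1 : ZMod p) else 0) := by
      intro c
      rw [show ((a.2 c.1 c.2).val • (tgt (D := D) (some c)).2) j i =
        (a.2 c.1 c.2).val • ((tgt (D := D) (some c)).2 j i) from rfl,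
        show (tgt (D := D) (some c)).2 = Pi.single c.1 (Pi.single c.2 1) from rfl,
        single_apply_sigma]
    simp only [hterm]
    rw [Finset.sum_eq_single (⟨j, i⟩ : (j : Fin p) × Fin (D.r j))]
    · rw [if_pos rfl]
      show ((a.2 j i).val : ℕ) • (1 : ZMod p) = a.2 j i
      rw [nsmul_eq_mul, mul_one]
      exact ZMod.natCast_rightInverse _
    · intro b _ hb'
      rw [if_neg (fun h => hb' h.symm), smul_zero]
    · intro h
      exact absurd (Finset.mem_univ _) h

theorem mult_pow_p (m : Multiplicative (AbT p D)) : m ^ p = 1 := by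
  have h : (m ^ p).toAdd = (1 : Multiplicative (AbT p D)).toAdd := by
    rw [toAdd_pow]
    exact smul_p_ab _
  exact Multiplicative.toAdd.injective h

section Chi

variable {Q : Type*} [CommGroup Q]

theorem pow_val_add {q : Q} (hq : q ^ p = 1) (z w : ZMod p) :
    q ^ (z + w).val = q ^ z.val * q ^ w.val := by
  rw [← pow_add, ZMod.val_add, ← pow_eq_pow_mod _ hq]

/-- The inverse comparison homomorphism `Multiplicative A →* Q`. -/
def chiHom (q0 : Q) (qb : ((j : Fin p) × Fin (D.r j)) → Q)
    (h0 : q0 ^ p = 1) (hb : ∀ s, qb s ^ p = 1) :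
    Multiplicative (AbT p D) →* Q where
  toFun m := q0 ^ ((Multiplicative.toAdd m).1).val *
    ∏ s : (j : Fin p) × Fin (D.r j), qb s ^ (((Multiplicative.toAdd m).2 s.1 s.2).val)
  map_one' := by
    have h1 : (Multiplicative.toAdd (1 : Multiplicative (AbT p D))) = 0 := rfl
    rw [h1]
    simp [ZMod.val_zero]
  map_mul' x y := by
    have h1 : (Multiplicative.toAdd (x * y)) =
      Multiplicative.toAdd x + Multiplicative.toAdd y := rfl
    rw [h1]
    simp only [Prod.fst_add, Prod.snd_add, Pi.add_apply]
    rw [pow_val_add h0]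
    have h2 : ∀ s : (j : Fin p) × Fin (D.r j),
        qb s ^ ((((Multiplicative.toAdd x).2 s.1 s.2) +
          ((Multiplicative.toAdd y).2 s.1 s.2)).val) =
        qb s ^ (((Multiplicative.toAdd x).2 s.1 s.2).val) *
          qb s ^ (((Multiplicative.toAdd y).2 s.1 s.2).val) := fun s => pow_val_add (hb s) _ _
    simp only [h2]
    rw [Finset.prod_mul_distrib]
    exact mul_mul_mul_comm _ _ _ _

theorem chiHom_a (hp1 : 1 < p) (q0 : Q) (qb : ((j : Fin p) × Fin (D.r j)) → Q)
    (h0 : q0 ^ p = 1) (hb : ∀ s, qb s ^ p = 1) :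
    chiHom q0 qb h0 hb (Multiplicative.ofAdd
      ((1 : ZMod p), (0 : (j : Fin p) → Fin (D.r j) → ZMod p))) = q0 := by
  haveI : Fact (1 < p) := ⟨hp1⟩
  show q0 ^ ((1 : ZMod p)).val * ∏ s : (j : Fin p) × Fin (D.r j),
    qb s ^ (((0 : (j : Fin p) → Fin (D.r j) → ZMod p) s.1 s.2).val) = q0
  rw [ZMod.val_one]
  simp [ZMod.val_zero]

theorem chiHom_b (hp1 : 1 < p) (q0 : Q) (qb : ((j : Fin p) × Fin (D.r j)) → Q)
    (h0 : q0 ^ p = 1) (hb : ∀ s, qb s ^ p = 1) (j : Fin p) (i : Fin (D.r j)) :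
    chiHom q0 qb h0 hb (Multiplicative.ofAdd
      ((0 : ZMod p), Pi.single j (Pi.single i (1 : ZMod p)))) = qb ⟨j, i⟩ := by
  haveI : Fact (1 < p) := ⟨hp1⟩
  show q0 ^ ((0 : ZMod p)).val * ∏ s : (j : Fin p) × Fin (D.r j),
    qb s ^ ((Pi.single (M := fun j => Fin (D.r j) → ZMod p) j
      (Pi.single i (1 : ZMod p)) s.1 s.2).val) = qb ⟨j, i⟩
  rw [ZMod.val_zero, pow_zero, one_mul]
  rw [Finset.prod_eq_single (⟨j, i⟩ : (j : Fin p) × Fin (D.r j)) ?h1 ?h2]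
  · rw [show Pi.single (M := fun j => Fin (D.r j) → ZMod p) j
        (Pi.single i (1 : ZMod p)) j i = 1 by
      rw [Pi.single_eq_same, Pi.single_eq_same], ZMod.val_one, pow_one]
  case h1 =>
    intro b _ hb'
    rw [show Pi.single (M := fun j => Fin (D.r j) → ZMod p) j
        (Pi.single i (1 : ZMod p)) b.1 b.2 =
      if (⟨b.1, b.2⟩ : (j : Fin p) × Fin (D.r j)) = ⟨j, i⟩ then 1 else 0 from
        single_apply_sigma ⟨j, i⟩ b.1 b.2, if_neg (by
          intro h
          exact hb' (by rcases b with ⟨b1, b2⟩; exact h)), ZMod.val_zero, pow_zero]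
  case h2 =>
    intro h
    exact absurd (Finset.mem_univ _) h

end Chi

end Aux6

theorem stmt5 (p : ℕ) (hp : p.Prime) (hodd : Odd p) [NeZero p]
    (D : SpinalData p) :
    Nat.card (Abelianization ↥(D.grp hp.one_lt)) = p ^ (1 + ∑ j, D.r j) ∧
    (∀ x : Abelianization ↥(D.grp hp.one_lt), x ^ p = 1) ∧
    ∃ φ : ↥(D.grp hp.one_lt) →*
        Multiplicative (ZMod p × ((j : Fin p) → Fin (D.r j) → ZMod p)),
      Function.Surjective φ ∧
      φ ⟨aAut p, aAut_mem_grp D hp.one_lt⟩ = Multiplicative.ofAdd (1, 0) ∧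
      (∀ (j : Fin p) (i : Fin (D.r j)),
        φ ⟨D.gen hp.one_lt j i, gen_mem_grp D hp.one_lt j i⟩ =
          Multiplicative.ofAdd (0, Pi.single j (Pi.single i (1 : ZMod p)))) ∧
      φ.ker = commutator ↥(D.grp hp.one_lt) := by
  classical
  have hp1 : 1 < p := hp.one_lt
  -- the evaluation homomorphism from the free group on the letters
  set π : FreeGroup (Ltr p D) →* Equiv.Perm (Vtx p) := FreeGroup.lift (lgen hp1 D) with hπ
  have hrange : π.range = D.grp hp1 := by
    rw [hπ, FreeGroup.range_lift_eq_closure]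
    show Subgroup.closure _ = Subgroup.closure _
    congr 1
    ext g
    simp only [Set.mem_range, SpinalData.genSet, Set.mem_insert_iff, Set.mem_setOf_eq]
    constructor
    · rintro ⟨u, rfl⟩
      cases u with
      | none => exact Or.inl rfl
      | some s => exact Or.inr ⟨s.1, s.2, rfl⟩
    · rintro (rfl | ⟨j, i, rfl⟩)
      · exact ⟨none, rfl⟩
      · exact ⟨some ⟨j, i⟩, rfl⟩
  have hmem : ∀ w, π w ∈ D.grp hp1 := fun w => hrange ▸ ⟨w, rfl⟩
  set π' : FreeGroup (Ltr p D) →* ↥(D.grp hp1) := π.codRestrict _ hmem with hπ'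
  have hπ'coe : ∀ w, (π' w : Equiv.Perm (Vtx p)) = π w := fun _ => rfl
  have hsurj' : Function.Surjective π' := by
    rintro ⟨g, hg⟩
    rw [← hrange] at hg
    obtain ⟨w, hw⟩ := hg
    exact ⟨w, Subtype.ext hw⟩
  set ψ : FreeGroup (Ltr p D) →* Multiplicative (AbT p D) :=
    FreeGroup.lift (fun u => Multiplicative.ofAdd (tgt u)) with hψ
  have hker : π'.ker ≤ ψ.ker := by
    intro w hw
    have h1 : π w = 1 := by
      have h2 : (π' w : Equiv.Perm (Vtx p)) = ((1 : ↥(D.grp hp1)) : Equiv.Perm (Vtx p)) :=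
        congrArg Subtype.val hw
      rw [hπ'coe] at h2
      exact h2
    exact MonoidHom.mem_ker.mpr (ker_lemma hp1 w h1)
  set φ : ↥(D.grp hp1) →* Multiplicative (AbT p D) :=
    (π'.liftOfRightInverse (Function.surjInv hsurj') (Function.rightInverse_surjInv hsurj'))
      ⟨ψ, hker⟩ with hφ
  have hcomp : ∀ w, φ (π' w) = ψ w := fun w =>
    π'.liftOfRightInverse_comp_apply _ _ ⟨ψ, hker⟩ w
  have hπa : π' (FreeGroup.of (none : Ltr p D)) = ⟨aAut p, aAut_mem_grp D hp1⟩ :=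
    Subtype.ext (by rw [hπ'coe, hπ, FreeGroup.lift_apply_of]; rfl)
  have hπb : ∀ (j : Fin p) (i : Fin (D.r j)),
      π' (FreeGroup.of (some ⟨j, i⟩ : Ltr p D)) = ⟨D.gen hp1 j i, gen_mem_grp D hp1 j i⟩ :=
    fun j i => Subtype.ext (by rw [hπ'coe, hπ, FreeGroup.lift_apply_of]; rfl)
  have hva : φ ⟨aAut p, aAut_mem_grp D hp1⟩ = Multiplicative.ofAdd (1, 0) := by
    rw [← hπa, hcomp, hψ, FreeGroup.lift_apply_of]
    rfl
  have hvb : ∀ (j : Fin p) (i : Fin (D.r j)),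
      φ ⟨D.gen hp1 j i, gen_mem_grp D hp1 j i⟩ =
        Multiplicative.ofAdd (0, Pi.single j (Pi.single i (1 : ZMod p))) := by
    intro j i
    rw [← hπb j i, hcomp, hψ, FreeGroup.lift_apply_of]
    rfl
  have hψsurj : Function.Surjective ψ := by
    intro m
    refine ⟨FreeGroup.of (none : Ltr p D) ^ ((Multiplicative.toAdd m).1.val) *
      ((Finset.univ : Finset ((j : Fin p) × Fin (D.r j))).toList.map
        (fun s => FreeGroup.of (some s : Ltr p D) ^
          (((Multiplicative.toAdd m).2 s.1 s.2).val))).prod, ?_⟩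
    rw [map_mul, map_pow, MonoidHom.map_list_prod, List.map_map]
    have hfn : (⇑ψ ∘ fun s : (j : Fin p) × Fin (D.r j) =>
        FreeGroup.of (some s : Ltr p D) ^ (((Multiplicative.toAdd m).2 s.1 s.2).val)) =
        fun s : (j : Fin p) × Fin (D.r j) =>
          Multiplicative.ofAdd ((((Multiplicative.toAdd m).2 s.1 s.2).val) •
            tgt (D := D) (some s)) := by
      funext s
      show ψ (FreeGroup.of (some s) ^ (((Multiplicative.toAdd m).2 s.1 s.2).val)) = _
      rw [map_pow, hψ, FreeGroup.lift_apply_of, ← ofAdd_nsmul]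
    rw [hfn, Finset.prod_map_toList, hψ, FreeGroup.lift_apply_of, ← ofAdd_nsmul, ← ofAdd_sum,
      ← ofAdd_add, tgt_decomp]
    exact ofAdd_toAdd m
  have hφsurj : Function.Surjective φ := by
    intro m
    obtain ⟨w, hw⟩ := hψsurj m
    exact ⟨π' w, by rw [hcomp w, hw]⟩
  -- the comparison homomorphism into the abelianization
  set θ : ↥(D.grp hp1) →* Abelianization ↥(D.grp hp1) := Abelianization.of with hθ
  have hsub_a : (⟨aAut p, aAut_mem_grp D hp1⟩ : ↥(D.grp hp1)) ^ p = 1 := by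
    apply Subtype.ext
    rw [SubmonoidClass.coe_pow]
    exact aAut_pow_p
  have hsub_b : ∀ s : (j : Fin p) × Fin (D.r j),
      (⟨D.gen hp1 s.1 s.2, gen_mem_grp D hp1 s.1 s.2⟩ : ↥(D.grp hp1)) ^ p = 1 := by
    intro s
    apply Subtype.ext
    rw [SubmonoidClass.coe_pow]
    exact dirAut_pow_p hp1 _ _
  have h0 : (θ ⟨aAut p, aAut_mem_grp D hp1⟩) ^ p = 1 := by
    rw [← map_pow, hsub_a, map_one]
  have hbq : ∀ s : (j : Fin p) × Fin (D.r j),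
      (θ ⟨D.gen hp1 s.1 s.2, gen_mem_grp D hp1 s.1 s.2⟩) ^ p = 1 := by
    intro s
    rw [← map_pow, hsub_b s, map_one]
  set χ : Multiplicative (AbT p D) →* Abelianization ↥(D.grp hp1) :=
    chiHom (θ ⟨aAut p, aAut_mem_grp D hp1⟩)
      (fun s => θ ⟨D.gen hp1 s.1 s.2, gen_mem_grp D hp1 s.1 s.2⟩) h0 hbq with hχ
  have key : χ.comp ψ = θ.comp π' := by
    refine FreeGroup.ext_hom _ _ fun u => ?_
    cases u with
    | none =>
        show χ (ψ (FreeGroup.of none)) = θ (π' (FreeGroup.of none))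
        rw [hψ, FreeGroup.lift_apply_of, hπa, hχ]
        exact chiHom_a hp1 _ _ h0 hbq
    | some s =>
        show χ (ψ (FreeGroup.of (some s))) = θ (π' (FreeGroup.of (some s)))
        rcases s with ⟨j, i⟩
        rw [hψ, FreeGroup.lift_apply_of, hπb j i, hχ]
        exact chiHom_b hp1 _ _ h0 hbq j i
  have hkerφ : φ.ker = commutator ↥(D.grp hp1) := by
    apply le_antisymm
    · intro g hg
      obtain ⟨w, rfl⟩ := hsurj' g
      have h2 : ψ w = 1 := by rw [← hcomp w]; exact hg
      have h3 : θ (π' w) = 1 := by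
        have h4 : χ (ψ w) = θ (π' w) := DFunLike.congr_fun key w
        rw [h2, map_one] at h4
        exact h4.symm
      exact (QuotientGroup.eq_one_iff (π' w)).mp h3
    · exact Abelianization.commutator_subset_ker φ
  have e' : Abelianization ↥(D.grp hp1) ≃* Multiplicative (AbT p D) :=
    (QuotientGroup.quotientMulEquivOfEq hkerφ.symm).trans
      (QuotientGroup.quotientKerEquivOfSurjective φ hφsurj)
  refine ⟨?_, ?_, φ, hφsurj, hva, hvb, hkerφ⟩
  · -- cardinality
    show Nat.card (Abelianization ↥(D.grp hp1)) = p ^ (1 + ∑ j, D.r j)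
    have hc1 : Nat.card (Abelianization ↥(D.grp hp1)) = Nat.card (AbT p D) := by
      rw [Nat.card_congr e'.toEquiv]
      exact Nat.card_congr Multiplicative.toAdd
    rw [hc1]
    show Nat.card (ZMod p × ((j : Fin p) → Fin (D.r j) → ZMod p)) = p ^ (1 + ∑ j, D.r j)
    rw [Nat.card_prod, Nat.card_zmod, Nat.card_pi]
    have hcard : ∀ j : Fin p, Nat.card (Fin (D.r j) → ZMod p) = p ^ (D.r j) := by
      intro j
      rw [Nat.card_fun, Nat.card_zmod, Nat.card_eq_fintype_card, Fintype.card_fin]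
    simp only [hcard]
    rw [Finset.prod_pow_eq_pow_sum, pow_add, pow_one]
  · -- exponent
    intro x
    apply e'.injective
    rw [map_pow, map_one]
    exact mult_pow_p _

end GMS
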